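/- arXiv:2601.11221 — 6 statements merged into one kernel-verified Lean document; each statement's English description precedes it below -/
import Mathlib

section
/- Let C, A, B, D be partial orders each having a greatest element ⊤, and let f : C → A, g : C → B, u : A → D, v : B → D be monotone maps such that f ⊤ = ⊤ and v (g x) ≤ u (f x) for all x ∈ C. Suppose the lax square has interpolation: for all a ∈ A and b ∈ B with v b ≤ u a there exists c ∈ C with b ≤ g c and f c ≤ a. If g is t-conservative, then u is t-conservative. -/
/-- In a lax square of monotone maps between partial orders with top,
with `f ⊤ = ⊤`, if the square has interpolation and `g` is t-conservative, then `u` is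
t-conservative. -/
theorem stmt_0 {C A B D : Type*} [PartialOrder C] [OrderTop C]
    [PartialOrder A] [OrderTop A] [PartialOrder B] [OrderTop B]
    [PartialOrder D] [OrderTop D]
    (f : C →o A) (g : C →o B) (u : A →o D) (v : B →o D)
    (hf : f ⊤ = ⊤)
    (lax : ∀ x : C, v (g x) ≤ u (f x))
    (interp : ∀ (a : A) (b : B), v b ≤ u a → ∃ c : C, b ≤ g c ∧ f c ≤ a)
    (hg : ∀ x : C, g x = ⊤ → x = ⊤) :
    ∀ a : A, u a = ⊤ → a = ⊤ := by
  intro a ha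
  obtain ⟨c, hc1, hc2⟩ := interp a ⊤ (by rw [ha]; exact le_top)
  have hc : c = ⊤ := hg c (top_le_iff.mp hc1)
  rw [hc, hf] at hc2
  exact top_le_iff.mp hc2
end

section
/- Let C and E be categories with finite limits, let a be an object of C, and let F : C ⥤ E be a functor preserving finite limits. Then the following are equivalent: (i) there exists a morphism ⊤_E ⟶ F.obj a from the terminal object of E (a global section of F a); (ii) there exists a functor G : Over a ⥤ E preserving finite limits together with a natural isomorphism Over.star a ⋙ G ≅ F. -/
open CategoryTheory CategoryTheory.Limits

noncomputable section Stmt2Aux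

namespace Stmt2Aux

variable {C : Type*} [Category C] {D : Type*} [Category D]

lemma postPreservesFiniteLimits (a : C) [HasFiniteLimits C] [HasFiniteLimits D]
    (F : C ⥤ D) [PreservesFiniteLimits F] :
    PreservesFiniteLimits (Over.post (X := a) F) := by
  haveI : PreservesLimitsOfShape WalkingCospan (Over.post (X := a) F ⋙ Over.forget (F.obj a)) :=
    preservesLimitsOfShape_of_natIso (F := Over.forget a ⋙ F) (Iso.refl _)
  haveI : PreservesLimitsOfShape WalkingCospan (Over.post (X := a) F) :=
    preservesLimitsOfShape_of_reflects_of_preserves _ (Over.forget (F.obj a))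
  haveI : PreservesLimit (Functor.empty.{0} (Over a)) (Over.post (X := a) F) := by
    refine preservesTerminal_of_iso _ ?_
    exact (Over.post F).mapIso (terminalIsTerminal.uniqueUpToIso Over.mkIdTerminal) ≪≫
      (Over.isoMk (Iso.refl _) (by simp [Over.post]) :
        (Over.post F).obj (Over.mk (𝟙 a)) ≅ Over.mk (𝟙 (F.obj a))) ≪≫
      Over.mkIdTerminal.uniqueUpToIso terminalIsTerminal
  haveI : PreservesLimitsOfShape (Discrete PEmpty.{1}) (Over.post (X := a) F) :=
    preservesLimitsOfShape_pempty_of_preservesTerminal _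
  exact preservesFiniteLimits_of_preservesTerminal_and_pullbacks _

instance forgetTerminalFull [HasTerminal D] : (Over.forget (⊤_ D)).Full where
  map_surjective f := ⟨Over.homMk f (terminal.hom_ext _ _), rfl⟩

instance forgetTerminalEssSurj [HasTerminal D] : (Over.forget (⊤_ D)).EssSurj where
  mem_essImage X := ⟨Over.mk (terminal.from X), ⟨Iso.refl _⟩⟩

instance forgetTerminalIsEquivalence [HasTerminal D] : (Over.forget (⊤_ D)).IsEquivalence where

variable [HasFiniteLimits C] [HasFiniteLimits D]
variable (a : C) (F : C ⥤ D) [PreservesFiniteLimits F] (s : ⊤_ D ⟶ F.obj a)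

/-- The pullback functor. -/
def G : Over a ⥤ D := Over.post F ⋙ Over.pullback s ⋙ Over.forget (⊤_ D)

lemma G_preservesFiniteLimits : PreservesFiniteLimits (G a F s) := by
  haveI := postPreservesFiniteLimits a F
  haveI : PreservesLimits (Over.pullback s) :=
    (Over.mapPullbackAdj s).rightAdjoint_preservesLimits
  haveI : PreservesLimits (Over.forget (⊤_ D)) := Adjunction.isEquivalencePreservesLimits _
  exact comp_preservesFiniteLimits _ _

def t : Over.star a ⋙ G a F s ⟶ F where
  app b := pullback.fst (F.map ((Over.star a).obj b).hom) s ≫ F.map (prod.snd : a ⨯ b ⟶ b)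
  naturality b b' f := by
    dsimp [G]
    show pullback.lift (pullback.fst _ _ ≫ F.map ((Over.star a).map f).left) _ _ ≫ _ = _
    erw [pullback.lift_fst_assoc, Category.assoc, ← F.map_comp]
    exact (congrArg (fun g => pullback.fst (F.map ((Over.star a).obj b).hom) s ≫ F.map g)
      (prod.map_snd (𝟙 a) f)).trans ((congrArg (pullback.fst (F.map ((Over.star a).obj b).hom) s ≫ ·)
      (F.map_comp _ _)).trans (Category.assoc _ _ _).symm)

lemma isIso_t_app (b : C) : IsIso ((t a F s).app b) := by
  have e : ((Over.star a).obj b).hom = (prod.fst : a ⨯ b ⟶ a) := (Over.star_obj_hom a b).trans (Limits.prod.lift_fst _ _)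
  have h1 : inv (prodComparison F a b) ≫ F.map ((Over.star a).obj b).hom = prod.fst := by
    rw [IsIso.inv_comp_eq, e, prodComparison_fst]
  have h2 : inv (prodComparison F a b) ≫ F.map (prod.snd : a ⨯ b ⟶ b) = prod.snd := by
    rw [IsIso.inv_comp_eq, prodComparison_snd]
  have w : (prod.lift (terminal.from (F.obj b) ≫ s) (𝟙 _) ≫ inv (prodComparison F a b)) ≫
      F.map ((Over.star a).obj b).hom = terminal.from (F.obj b) ≫ s := by
    rw [Category.assoc, h1]
    exact Limits.prod.lift_fst _ _
  refine ⟨pullback.lift _ (terminal.from _) w, ?_, ?_⟩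
  · show (pullback.fst (F.map ((Over.star a).obj b).hom) s ≫ F.map (prod.snd : a ⨯ b ⟶ b)) ≫
      pullback.lift _ _ w = 𝟙 _
    apply pullback.hom_ext
    · erw [Category.id_comp, Category.assoc, pullback.lift_fst]
      erw [← cancel_mono (prodComparison F a b)]
      apply Limits.prod.hom_ext
      · simp only [Category.assoc, IsIso.inv_hom_id, Category.comp_id, prodComparison_fst,
          Limits.prod.lift_fst]
        erw [Category.assoc, prodComparison_fst, ← e, pullback.condition]
        rw [← Category.assoc, ← Category.assoc]
        congr 1
        apply terminal.hom_ext
      · simp only [Category.assoc, IsIso.inv_hom_id, Category.comp_id, prodComparison_snd,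
          Limits.prod.lift_snd, Category.comp_id]
        erw [Category.assoc, prodComparison_snd]
        rfl
    · apply terminal.hom_ext
  · show pullback.lift _ _ w ≫
      (pullback.fst (F.map ((Over.star a).obj b).hom) s ≫ F.map (prod.snd : a ⨯ b ⟶ b)) = 𝟙 _
    erw [pullback.lift_fst_assoc, Category.assoc, h2, Limits.prod.lift_snd]

def starCompGIso : Over.star a ⋙ G a F s ≅ F := by
  haveI : ∀ b, IsIso ((t a F s).app b) := isIso_t_app a F s
  haveI : IsIso (t a F s) := NatIso.isIso_of_isIso_app _
  exact asIso (t a F s)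

end Stmt2Aux

end Stmt2Aux

/-- For lex categories `C`, `E`, an object `a : C` and a finite-limit
preserving functor `F : C ⥤ E`, the following are equivalent: `F.obj a` has a global
section, and `F` factors (up to iso) through the slicing functor `Over.star a : C ⥤ Over a`
via a finite-limit preserving functor. -/
theorem stmt_2 {C : Type*} [Category C] {E : Type*} [Category E]
    [HasFiniteLimits C] [HasFiniteLimits E]
    (a : C) (F : C ⥤ E) [PreservesFiniteLimits F] :
    Nonempty (⊤_ E ⟶ F.obj a) ↔
      ∃ (G : Over a ⥤ E) (_ : PreservesFiniteLimits G),
        Nonempty (Over.star a ⋙ G ≅ F) := by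
  constructor
  · rintro ⟨s⟩
    exact ⟨Stmt2Aux.G a F s, Stmt2Aux.G_preservesFiniteLimits a F s, ⟨Stmt2Aux.starCompGIso a F s⟩⟩
  · rintro ⟨G, hG, ⟨e⟩⟩
    refine ⟨(PreservesTerminal.iso G).inv ≫
      G.map ((terminalIsTerminal.uniqueUpToIso Over.mkIdTerminal).hom ≫
        (Over.homMk (prod.lift (𝟙 a) (𝟙 a)) (by exact (congrArg (prod.lift (𝟙 a) (𝟙 a) ≫ ·) (Limits.prod.lift_fst (prod.fst : a ⨯ a ⟶ a) (𝟙 _))).trans (Limits.prod.lift_fst (𝟙 a) (𝟙 a))) :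
          Over.mk (𝟙 a) ⟶ (Over.star a).obj a)) ≫ e.hom.app a⟩
end

section
/- Let C and D be categories having initial objects, in both of which initial objects are strict (every morphism into an initial object is an isomorphism), and let F : C ⥤ D be left adjoint to G : D ⥤ C. Then G.obj (⊥_D) is an initial object of C if and only if F reflects initial objects, i.e., for every object A of C, if F.obj A is initial in D then A is initial in C. -/
open CategoryTheory CategoryTheory.Limits

/-- Let `F ⊣ G` be an adjunction between categories with strict initial
objects. Then `G.obj (⊥_ D)` is initial (i.e. the right adjoint preserves the initial
object) iff `F` reflects initial objects. -/
theorem stmt_6 {C D : Type*} [Category C] [Category D]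
    [HasInitial C] [HasInitial D]
    [HasStrictInitialObjects C] [HasStrictInitialObjects D]
    (F : C ⥤ D) (G : D ⥤ C) (adj : F ⊣ G) :
    Nonempty (IsInitial (G.obj (⊥_ D))) ↔
      ∀ A : C, Nonempty (IsInitial (F.obj A)) → Nonempty (IsInitial A) := by
  constructor
  · rintro ⟨hG⟩ A ⟨hFA⟩
    let f : A ⟶ ⊥_ C := adj.homEquiv A (⊥_ D) (hFA.to (⊥_ D)) ≫ hG.to (⊥_ C)
    exact ⟨IsInitial.ofIso initialIsInitial (asIso f).symm⟩
  · intro h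
    refine h _ ⟨?_⟩
    let e : F.obj (G.obj (⊥_ D)) ⟶ ⊥_ D := adj.counit.app (⊥_ D)
    exact IsInitial.ofIso initialIsInitial (asIso e).symm
end

section
/- Let A, B, C, D be bounded distributive lattices in a common universe and let f : C → A, g : C → B, u : A → D, v : B → D be bounded lattice homomorphisms with v (g c) ≤ u (f c) for all c ∈ C. Suppose the square is a cocomma square: for every bounded distributive lattice E in the same universe and all bounded lattice homomorphisms p : A → E, q : B → E with q (g c) ≤ p (f c) for all c ∈ C, there exists a unique bounded lattice homomorphism h : D → E with h ∘ u = p and h ∘ v = q. Then the square has interpolation: for all a ∈ A and b ∈ B with v b ≤ u a, there exists c ∈ C with b ≤ g c and f c ≤ a. -/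
universe u

/-- A cocomma square of bounded distributive lattices has interpolation. -/
theorem stmt_8 {A B C D : Type u}
    [DistribLattice A] [BoundedOrder A] [DistribLattice B] [BoundedOrder B]
    [DistribLattice C] [BoundedOrder C] [DistribLattice D] [BoundedOrder D]
    (f : BoundedLatticeHom C A) (g : BoundedLatticeHom C B)
    (u : BoundedLatticeHom A D) (v : BoundedLatticeHom B D)
    (lax : ∀ c : C, v (g c) ≤ u (f c))
    (cocomma : ∀ (E : Type u) [DistribLattice E] [BoundedOrder E]
      (p : BoundedLatticeHom A E) (q : BoundedLatticeHom B E),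
      (∀ c : C, q (g c) ≤ p (f c)) →
      ∃! h : BoundedLatticeHom D E, h.comp u = p ∧ h.comp v = q) :
    ∀ (a : A) (b : B), v b ≤ u a → ∃ c : C, b ≤ g c ∧ f c ≤ a := by
  intro a b hba
  by_contra hno
  -- the filter of elements of `A` above `f c` for some `c` with `b ≤ g c`
  let F₁ : Order.PFilter A :=
    ⟨{ carrier := {a' : Aᵒᵈ | ∃ c : C, b ≤ g c ∧ f c ≤ OrderDual.ofDual a'}
       lower' := by
         rintro x y hxy ⟨c, hc1, hc2⟩
         exact ⟨c, hc1, le_trans hc2 hxy⟩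
       nonempty' := ⟨OrderDual.toDual ⊤, ⊤, by rw [map_top]; exact le_top,
         by rw [map_top]; exact le_rfl⟩
       directed' := by
         rintro x ⟨c₁, hb₁, hf₁⟩ y ⟨c₂, hb₂, hf₂⟩
         refine ⟨OrderDual.toDual (OrderDual.ofDual x ⊓ OrderDual.ofDual y),
           ⟨c₁ ⊓ c₂, ?_, ?_⟩, ?_, ?_⟩
         · rw [map_inf]; exact le_inf hb₁ hb₂
         · rw [map_inf]
           exact le_inf (le_trans inf_le_left hf₁) (le_trans inf_le_right hf₂)
         · exact (inf_le_left : OrderDual.ofDual x ⊓ OrderDual.ofDual y ≤ _)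
         · exact (inf_le_right : OrderDual.ofDual x ⊓ OrderDual.ofDual y ≤ _) }⟩
  have memF₁ : ∀ x : A, x ∈ F₁ ↔ ∃ c : C, b ≤ g c ∧ f c ≤ x := fun x => Iff.rfl
  have hdisj1 : Disjoint (F₁ : Set A) (Order.Ideal.principal a : Set A) := by
    rw [Set.disjoint_left]
    rintro x hx hx'
    obtain ⟨c, hc1, hc2⟩ := (memF₁ x).1 hx
    exact hno ⟨c, hc1, hc2.trans (Order.Ideal.mem_principal.1 hx')⟩
  obtain ⟨J, Jprime, hIJ, hJF⟩ := DistribLattice.prime_ideal_of_disjoint_filter_ideal hdisj1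
  have haJ : a ∈ J := hIJ Order.Ideal.mem_principal_self
  have htopJ : (⊤ : A) ∉ J := by
    refine Set.disjoint_left.1 hJF ((memF₁ ⊤).2 ⟨⊤, ?_, le_top⟩)
    rw [map_top]; exact le_top
  -- the ideal of elements of `B` below `g c` for some `c` with `f c ∈ J`
  let I₂ : Order.Ideal B :=
    { carrier := {b' : B | ∃ c : C, b' ≤ g c ∧ f c ∈ J}
      lower' := by
        rintro x y hyx ⟨c, hc1, hc2⟩
        exact ⟨c, hyx.trans hc1, hc2⟩
      nonempty' := ⟨⊥, ⊥, bot_le, by rw [map_bot]; exact J.bot_mem⟩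
      directed' := by
        rintro x ⟨c₁, hx₁, hx₂⟩ y ⟨c₂, hy₁, hy₂⟩
        refine ⟨x ⊔ y, ⟨c₁ ⊔ c₂, ?_, ?_⟩, le_sup_left, le_sup_right⟩
        · rw [map_sup]; exact sup_le_sup hx₁ hy₁
        · rw [map_sup]; exact Order.Ideal.sup_mem hx₂ hy₂ }
  have memI₂ : ∀ x : B, x ∈ I₂ ↔ ∃ c : C, x ≤ g c ∧ f c ∈ J := fun x => Iff.rfl
  have hdisj2 : Disjoint ((Order.PFilter.principal b : Order.PFilter B) : Set B)
      (I₂ : Set B) := by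
    rw [Set.disjoint_left]
    rintro x hx hx'
    obtain ⟨c, hc1, hc2⟩ := (memI₂ x).1 hx'
    have hbx : b ≤ x := hx
    have : f c ∈ F₁ := (memF₁ (f c)).2 ⟨c, hbx.trans hc1, le_rfl⟩
    exact Set.disjoint_left.1 hJF this hc2
  obtain ⟨K, Kprime, hI₂K, hKF⟩ := DistribLattice.prime_ideal_of_disjoint_filter_ideal hdisj2
  have hbK : b ∉ K := fun h => Set.disjoint_left.1 hKF (le_refl b) h
  have htopK : (⊤ : B) ∉ K := Set.disjoint_left.1 hKF (le_top : b ≤ ⊤)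
  -- indicator lattice homs into `ULift Prop`
  let p : BoundedLatticeHom A (ULift.{u} Prop) :=
    { toFun := fun x => ⟨x ∉ J⟩
      map_sup' := fun x y => by
        refine congrArg ULift.up ?_
        show ((x ⊔ y ∉ J) = ((x ∉ J) ⊔ (y ∉ J)))
        simp only [sup_Prop_eq, eq_iff_iff, Order.Ideal.sup_mem_iff]
        tauto
      map_inf' := fun x y => by
        refine congrArg ULift.up ?_
        show ((x ⊓ y ∉ J) = ((x ∉ J) ⊓ (y ∉ J)))
        simp only [inf_Prop_eq, eq_iff_iff]
        constructor
        · intro h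
          exact ⟨fun hx => h (J.lower inf_le_left hx), fun hy => h (J.lower inf_le_right hy)⟩
        · rintro ⟨hx, hy⟩ h
          rcases Jprime.mem_or_mem h with h' | h'
          · exact hx h'
          · exact hy h'
      map_top' := by
        refine congrArg ULift.up ?_
        show (((⊤ : A) ∉ J) = (⊤ : Prop))
        rw [Prop.top_eq_true]
        exact eq_true htopJ
      map_bot' := by
        refine congrArg ULift.up ?_
        show (((⊥ : A) ∉ J) = (⊥ : Prop))
        rw [Prop.bot_eq_false]
        exact eq_false (not_not_intro J.bot_mem) }
  let q : BoundedLatticeHom B (ULift.{u} Prop) :=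
    { toFun := fun x => ⟨x ∉ K⟩
      map_sup' := fun x y => by
        refine congrArg ULift.up ?_
        show ((x ⊔ y ∉ K) = ((x ∉ K) ⊔ (y ∉ K)))
        simp only [sup_Prop_eq, eq_iff_iff, Order.Ideal.sup_mem_iff]
        tauto
      map_inf' := fun x y => by
        refine congrArg ULift.up ?_
        show ((x ⊓ y ∉ K) = ((x ∉ K) ⊓ (y ∉ K)))
        simp only [inf_Prop_eq, eq_iff_iff]
        constructor
        · intro h
          exact ⟨fun hx => h (K.lower inf_le_left hx), fun hy => h (K.lower inf_le_right hy)⟩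
        · rintro ⟨hx, hy⟩ h
          rcases Kprime.mem_or_mem h with h' | h'
          · exact hx h'
          · exact hy h'
      map_top' := by
        refine congrArg ULift.up ?_
        show (((⊤ : B) ∉ K) = (⊤ : Prop))
        rw [Prop.top_eq_true]
        exact eq_true htopK
      map_bot' := by
        refine congrArg ULift.up ?_
        show (((⊥ : B) ∉ K) = (⊥ : Prop))
        rw [Prop.bot_eq_false]
        exact eq_false (not_not_intro K.bot_mem) }
  have laxpq : ∀ c : C, q (g c) ≤ p (f c) := by
    intro c
    intro hgc hfc
    exact hgc (hI₂K ((memI₂ (g c)).2 ⟨c, le_rfl, hfc⟩))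
  obtain ⟨h, ⟨hu, hv⟩, -⟩ := cocomma (ULift.{u} Prop) p q laxpq
  have hmono : h (v b) ≤ h (u a) := OrderHomClass.mono h hba
  have h1 : h (v b) = q b := DFunLike.congr_fun hv b
  have h2 : h (u a) = p a := DFunLike.congr_fun hu a
  rw [h1, h2] at hmono
  exact (hmono hbK) haJ
end

section
/- Let C, E, E′ be categories with finite limits, let a be an object of C, let H : E ⥤ E′ be a fully faithful functor preserving finite limits, let F : C ⥤ E be a functor preserving finite limits, and let K : Over a ⥤ E′ be a functor preserving finite limits together with a natural isomorphism Over.star a ⋙ K ≅ F ⋙ H. Then there exists a functor G : Over a ⥤ E preserving finite limits together with a natural isomorphism G ⋙ H ≅ K. -/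
open CategoryTheory CategoryTheory.Limits

attribute [local simp] prod.lift_fst prod.lift_snd prod.lift_fst_assoc prod.lift_snd_assoc

/-- The fork exhibiting `b` as the equalizer of `prod.map (𝟙 a) f` and
`prod.lift prod.fst prod.fst` on `a ⨯ b`. -/
noncomputable def stmt9Fork {C : Type*} [Category C] [HasBinaryProducts C] {a b : C} (f : b ⟶ a) :
    IsLimit (Fork.ofι (prod.lift f (𝟙 b))
      (by apply Limits.prod.hom_ext <;> simp) :
      Fork (prod.map (𝟙 a) f) (prod.lift prod.fst prod.fst)) :=
  Fork.IsLimit.mk' _ fun s => by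
    have h : s.ι ≫ prod.snd ≫ f = s.ι ≫ prod.fst := by
      calc s.ι ≫ prod.snd ≫ f = (s.ι ≫ prod.map (𝟙 a) f) ≫ prod.snd := by simp
        _ = (s.ι ≫ prod.lift prod.fst prod.fst) ≫ prod.snd := by rw [s.condition]
        _ = s.ι ≫ prod.fst := by simp
    refine ⟨s.ι ≫ prod.snd, ?_, ?_⟩
    · apply Limits.prod.hom_ext
      · simpa using h
      · simp
    · intro m hm
      have hm' : m ≫ prod.lift f (𝟙 b) = s.ι := hm
      calc m = (m ≫ prod.lift f (𝟙 b)) ≫ prod.snd := by simp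
        _ = s.ι ≫ prod.snd := by rw [hm']

/-- The slicing functor `Over.star a : C ⥤ Over a` is left orthogonal to
fully faithful finite-limit preserving functors: if `H : E ⥤ E'` is fully faithful and lex,
`F : C ⥤ E` is lex, and `K : Over a ⥤ E'` is lex with `Over.star a ⋙ K ≅ F ⋙ H`, then `K`
factors through `H` via a lex functor `G : Over a ⥤ E`. -/
theorem stmt_9 {C : Type*} [Category C] {E : Type*} [Category E] {E' : Type*} [Category E']
    [HasFiniteLimits C] [HasFiniteLimits E] [HasFiniteLimits E']
    (a : C) (H : E ⥤ E') [H.Full] [H.Faithful] [PreservesFiniteLimits H]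
    (F : C ⥤ E) [PreservesFiniteLimits F]
    (K : Over a ⥤ E') [PreservesFiniteLimits K]
    (ψ : Over.star a ⋙ K ≅ F ⋙ H) :
    ∃ (G : Over a ⥤ E) (_ : PreservesFiniteLimits G), Nonempty (G ⋙ H ≅ K) := by
  classical
  -- Step 1: every `K.obj p` is in the essential image of `H`.
  have hmem : ∀ p : Over a, H.essImage (K.obj p) := by
    intro p
    set b := p.left with hb
    set f := p.hom with hf
    -- morphisms in `Over a`
    let u : (Over.star a).obj b ⟶ (Over.star a).obj a := (Over.star a).map f
    let v : (Over.star a).obj b ⟶ (Over.star a).obj a :=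
      Over.homMk (prod.lift prod.fst prod.fst) (by
        change prod.lift prod.fst prod.fst ≫ (prod.lift prod.fst (𝟙 (a ⨯ a)) ≫ prod.fst) =
          (prod.lift prod.fst (𝟙 (a ⨯ b)) ≫ prod.fst : a ⨯ b ⟶ a)
        simp)
    let e : p ⟶ (Over.star a).obj b := Over.homMk (prod.lift f (𝟙 b)) (by
      change prod.lift f (𝟙 b) ≫ (prod.lift prod.fst (𝟙 (a ⨯ b)) ≫ prod.fst : a ⨯ b ⟶ a) = f
      simp)
    have hcond : e ≫ u = e ≫ v := by
      ext
      change prod.lift f (𝟙 p.left) ≫ prod.map (𝟙 a) f = prod.lift f (𝟙 p.left) ≫ prod.lift prod.fst prod.fst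
      apply Limits.prod.hom_ext <;> simp [u, v, e]
    -- `p` is the equalizer of `u, v` in `Over a`
    have hlim : IsLimit (Fork.ofι e hcond) := by
      apply isLimitOfIsLimitForkMap (Over.forget a)
      exact (stmt9Fork f).ofIsoLimit (Fork.ext (Iso.refl _) (by simp [e]; rfl))
    -- apply `K`
    have hK : IsLimit (Fork.ofι (K.map e)
        (by simp only [← K.map_comp, hcond]) : Fork (K.map u) (K.map v)) :=
      isLimitForkMapOfIsLimit K _ hlim
    -- the corresponding parallel pair in `E`
    let w : F.obj b ⟶ F.obj a := H.preimage (ψ.inv.app b ≫ K.map v ≫ ψ.hom.app a)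
    -- the equalizer in `E` and its image under `H`
    have hH : IsLimit (Fork.ofι (H.map (equalizer.ι (F.map f) w))
        (by simp only [← H.map_comp]; rw [equalizer.condition]) :
        Fork (H.map (F.map f)) (H.map w)) :=
      isLimitOfHasEqualizerOfPreservesLimit H (F.map f) w
    -- the two parallel pairs are isomorphic
    have hnat : parallelPair (K.map u) (K.map v) ≅
        parallelPair (H.map (F.map f)) (H.map w) := by
      refine parallelPair.ext (ψ.app b) (ψ.app a) ?_ ?_
      · simpa [u] using ψ.hom.naturality f
      · simp [w, v]
    exact ⟨equalizer (F.map f) w,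
      ⟨(IsLimit.conePointsIsoOfNatIso hK hH hnat).symm⟩⟩
  -- Step 2: factor `K` through the essential image of `H`.
  let K' : Over a ⥤ H.EssImageSubcategory := ObjectProperty.lift _ K hmem
  have : H.toEssImage.IsEquivalence := {}
  let eqv := H.toEssImage.asEquivalence
  let G : Over a ⥤ E := K' ⋙ eqv.inverse
  have iso1 : eqv.inverse ⋙ H ≅ H.essImage.ι :=
    Functor.isoWhiskerLeft eqv.inverse H.toEssImageCompι.symm ≪≫
      (Functor.associator _ _ _).symm ≪≫
      Functor.isoWhiskerRight eqv.counitIso H.essImage.ι ≪≫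
      Functor.leftUnitor _
  have iso2 : G ⋙ H ≅ K :=
    Functor.associator _ _ _ ≪≫ Functor.isoWhiskerLeft K' iso1 ≪≫
      ObjectProperty.liftCompιIso _ K hmem
  have hGH : PreservesFiniteLimits (G ⋙ H) := preservesFiniteLimits_of_natIso iso2.symm
  have hG : PreservesFiniteLimits G := preservesFiniteLimits_of_reflects_of_preserves G H
  exact ⟨G, hG, ⟨iso2⟩⟩
end

section
/- Let f : A → B be a bounded lattice homomorphism between bounded distributive lattices and let a ∈ A. Equip Set.Iic a and Set.Iic (f a) with their induced bounded distributive lattice structures (with tops a and f a respectively), let σ_a : A → Set.Iic a and σ_{f a} : B → Set.Iic (f a) be the maps x ↦ x ⊓ a and y ↦ y ⊓ f a, and let f̄ : Set.Iic a → Set.Iic (f a) be ⟨x, hx⟩ ↦ ⟨f x, f-monotonicity⟩. Then f̄ is a bounded lattice homomorphism, f̄ ∘ σ_a = σ_{f a} ∘ f, and the square is a pushout: for every bounded distributive lattice E and all bounded lattice homomorphisms p : Set.Iic a → E and q : B → E with p ∘ σ_a = q ∘ f, there exists a unique bounded lattice homomorphism h : Set.Iic (f a) → E with h ∘ σ_{f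 a} = q and h ∘ f̄ = p. -/
universe u

variable {A : Type u} [DistribLattice A] [BoundedOrder A]
variable {B : Type u} [DistribLattice B] [BoundedOrder B]

/-- The induced distributive lattice structure on `Set.Iic a` (its lattice operations are
those of `A`, its bottom is `⟨⊥, bot_le⟩` and its top is `⟨a, le_rfl⟩`). -/
instance Set.Iic.instDistribLattice (a : A) : DistribLattice (Set.Iic a) :=
  Subtype.coe_injective.distribLattice _ Iff.rfl Iff.rfl (fun _ _ => rfl) (fun _ _ => rfl)

/-- The bounded lattice homomorphism `σ_a : A → Set.Iic a`, `x ↦ ⟨x ⊓ a, inf_le_right⟩`. -/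
def sigmaHom (a : A) : BoundedLatticeHom A (Set.Iic a) where
  toFun x := ⟨x ⊓ a, inf_le_right⟩
  map_sup' x y := Subtype.ext (by simp [inf_sup_right])
  map_inf' x y := Subtype.ext (by
    change (x ⊓ y) ⊓ a = (x ⊓ a) ⊓ (y ⊓ a)
    rw [inf_inf_distrib_right])
  map_top' := Subtype.ext (by simp)
  map_bot' := Subtype.ext (by simp)

/-- The sliced bounded lattice homomorphism `f̄ : Set.Iic a → Set.Iic (f a)`,
`⟨x, hx⟩ ↦ ⟨f x, _⟩`, induced by a bounded lattice homomorphism `f : A → B`. -/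
def sliceHom (f : BoundedLatticeHom A B) (a : A) :
    BoundedLatticeHom (Set.Iic a) (Set.Iic (f a)) where
  toFun x := ⟨f x.1, OrderHomClass.mono f x.2⟩
  map_sup' x y := Subtype.ext (by simp)
  map_inf' x y := Subtype.ext (by simp)
  map_top' := Subtype.ext (by simp [Set.Iic.coe_top])
  map_bot' := Subtype.ext (by simp)

/-- For a bounded lattice homomorphism `f : A → B` between bounded
distributive lattices and `a ∈ A`, the square formed by `σ_a`, `σ_{f a}`, `f` and
`f̄ : Set.Iic a → Set.Iic (f a)` commutes and is a pushout of bounded distributive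
lattices: slicing squares are pushouts, posetally. -/
theorem stmt_13 (f : BoundedLatticeHom A B) (a : A) :
    (sliceHom f a).comp (sigmaHom a) = (sigmaHom (f a)).comp f ∧
      ∀ (E : Type u) [DistribLattice E] [BoundedOrder E]
        (p : BoundedLatticeHom (Set.Iic a) E) (q : BoundedLatticeHom B E),
        p.comp (sigmaHom a) = q.comp f →
        ∃! h : BoundedLatticeHom (Set.Iic (f a)) E,
          h.comp (sigmaHom (f a)) = q ∧ h.comp (sliceHom f a) = p := by
  constructor
  · ext x
    show (f (x ⊓ a) : B) = f x ⊓ f a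
    simp
  · intro E _ _ p q hpq
    have hq : ∀ x : A, q (f x) = p ⟨x ⊓ a, inf_le_right⟩ :=
      fun x => (congrFun (congrArg DFunLike.coe hpq) x).symm
    refine ⟨{ toFun := fun y => q y.1
              map_sup' := fun x y => by simp [Set.Iic.coe_sup]
              map_inf' := fun x y => by simp [Set.Iic.coe_inf]
              map_top' := by
                show q (f a) = ⊤
                exact (hq a).trans ((congrArg p (Subtype.ext (inf_idem a))).trans p.map_top')
              map_bot' := q.map_bot' }, ⟨?_, ?_⟩, ?_⟩
    · ext y
      show q (y ⊓ f a) = q y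
      have hfa : q (f a) = ⊤ := by
        exact (hq a).trans ((congrArg p (Subtype.ext (inf_idem a))).trans p.map_top')
      rw [map_inf, hfa, inf_top_eq]
    · ext x
      show q (f x.1) = p x
      rw [hq x.1]
      congr 1
      exact Subtype.ext (inf_eq_left.mpr x.2)
    · intro h ⟨h1, _⟩
      ext y
      show h y = q y.1
      have := congrFun (congrArg DFunLike.coe h1) y.1
      simp only [BoundedLatticeHom.comp_apply] at this
      rw [← this]
      exact congrArg h (Subtype.ext (inf_eq_left.mpr y.2)).symm
end
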